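/- arXiv:2402.13580 — 4 statements merged into one kernel-verified Lean document; each statement's English description precedes it below -/
import Mathlib

section
/- Let ρ be a dissectible solution notion and f : Θ → X a social choice function. Then the canonical semi-operator γ^{(ρ,f)} is an operator: for every nonempty E ⊆ Θ and all θ, θ' ∈ E, one has θ ∈ γ^{(ρ,f)}[E,θ] ⊆ E, and θ' ∈ γ^{(ρ,f)}[E,θ] implies γ^{(ρ,f)}[E,θ'] = γ^{(ρ,f)}[E,θ]. -/
open scoped Classical

namespace SeqMech

variable {I : Type*} {Θi : I → Type*} {X : Type*}

/-- Projection of a set of states onto agent `i`'s coordinate. -/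
def proj (i : I) (E : Set (∀ j, Θi j)) : Set (Θi i) :=
  (fun θ => θ i) '' E

/-- Projection of a set of states onto the coordinates of the agents other than `i`. -/
def projNeg (i : I) (E : Set (∀ j, Θi j)) :
    Set (∀ j : {j : I // j ≠ i}, Θi j.1) :=
  (fun θ (j : {j : I // j ≠ i}) => θ j.1) '' E

/-- The semi-operator property: nonempty sets are mapped to nonempty sets. -/
def IsSemiOp (γ : Set (∀ j, Θi j) → (∀ j, Θi j) → Set (∀ j, Θi j)) : Prop :=
  ∀ E θ, E.Nonempty → (γ E θ).Nonempty

/-- A solution notion: `R f γ E θ θ' i Fhat` means `ρ[f,(γ,E),θ,θ',i,Fhat] = 1`.  Its value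
depends only on `(f, γ_i[E,θ], θ_i, θ'_i, Fhat_{-i})`. -/
structure SolutionNotion (I : Type*) (Θi : I → Type*) (X : Type*) where
  R : ((∀ j, Θi j) → X) →
      (Set (∀ j, Θi j) → (∀ j, Θi j) → Set (∀ j, Θi j)) →
      Set (∀ j, Θi j) → (∀ j, Θi j) → (∀ j, Θi j) → I → Set (∀ j, Θi j) → Prop
  meas : ∀ f γ γ' E E' θ τ θ' τ' (i : I) Fhat Fhat',
      proj i (γ E θ) = proj i (γ' E' τ) →
      θ i = τ i → θ' i = τ' i →
      projNeg i Fhat = projNeg i Fhat' →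
      (R f γ E θ θ' i Fhat ↔ R f γ' E' τ τ' i Fhat')

/-- Dissectibility of a solution notion. -/
def Dissectible (ρ : SolutionNotion I Θi X) : Prop :=
  ∀ f γ E θ θ' (i : I) Fhat,
    IsSemiOp γ → E.Nonempty → θ ∈ E → θ' ∈ E →
    (¬ ρ.R f γ E θ θ' i Fhat ↔
      ∃ τ ∈ γ E θ, ∃ γ' : Set (∀ j, Θi j) → (∀ j, Θi j) → Set (∀ j, Θi j),
        IsSemiOp γ' ∧ γ' E θ = {θ, τ} ∧ ¬ ρ.R f γ' E θ θ' i Fhat)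

/-- `θ >_i^{[(ρ,f),(γ,E)]} θ'`. -/
def gtRel (ρ : SolutionNotion I Θi X) (f : (∀ j, Θi j) → X)
    (γ : Set (∀ j, Θi j) → (∀ j, Θi j) → Set (∀ j, Θi j))
    (E : Set (∀ j, Θi j)) (i : I) (θ θ' : ∀ j, Θi j) : Prop :=
  θ ∈ E ∧ θ' ∈ E ∧ ¬ ρ.R f γ E θ θ' i E

/-- `θ ∼_i^{[(ρ,f),(γ,E)]} θ'`. -/
def simRel (ρ : SolutionNotion I Θi X) (f : (∀ j, Θi j) → X)
    (γ : Set (∀ j, Θi j) → (∀ j, Θi j) → Set (∀ j, Θi j))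
    (E : Set (∀ j, Θi j)) (i : I) (θ θ' : ∀ j, Θi j) : Prop :=
  θ i = θ' i ∨ gtRel ρ f γ E i θ θ' ∨ gtRel ρ f γ E i θ' θ

/-- `canonN ρ f n` is the semi-operator `γ^{(ρ,f)-(n+1)}`. -/
noncomputable def canonN (ρ : SolutionNotion I Θi X) (f : (∀ j, Θi j) → X) :
    ℕ → Set (∀ j, Θi j) → (∀ j, Θi j) → Set (∀ j, Θi j)
  | 0 => fun E θ => if θ ∈ E then {θ} else E
  | n + 1 => fun E θ =>
      if θ ∈ E then
        ⋃ τ ∈ canonN ρ f n E θ,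
          {θ' ∈ E | ∀ i, simRel ρ f (canonN ρ f n) E i τ θ'}
      else E

/-- The canonical semi-operator `γ^{(ρ,f)}`. -/
noncomputable def canon (ρ : SolutionNotion I Θi X) (f : (∀ j, Θi j) → X) :
    Set (∀ j, Θi j) → (∀ j, Θi j) → Set (∀ j, Θi j) :=
  fun E θ => if θ ∈ E then ⋃ n, canonN ρ f n E θ else E

section Aux

variable (ρ : SolutionNotion I Θi X) (f : (∀ j, Θi j) → X)

lemma canonN_of_not_mem (n : ℕ) {E : Set (∀ j, Θi j)} {θ : ∀ j, Θi j} (hθ : θ ∉ E) :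
    canonN ρ f n E θ = E := by
  cases n <;> simp [canonN, hθ]

lemma canonN_subset : ∀ (n : ℕ) (E : Set (∀ j, Θi j)) (θ : ∀ j, Θi j), θ ∈ E →
    canonN ρ f n E θ ⊆ E
  | 0, E, θ, hθ => by simp [canonN, hθ]
  | n+1, E, θ, hθ => by
      simp only [canonN, if_pos hθ]
      exact Set.iUnion₂_subset fun τ _ => Set.sep_subset _ _

lemma canonN_succ_apply (n : ℕ) (E : Set (∀ j, Θi j)) (θ : ∀ j, Θi j) (hθ : θ ∈ E) :
    canonN ρ f (n+1) E θ =
      ⋃ τ ∈ canonN ρ f n E θ, {θ' ∈ E | ∀ i, simRel ρ f (canonN ρ f n) E i τ θ'} := by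
  simp only [canonN, if_pos hθ]

lemma mem_canonN_succ {n : ℕ} {E : Set (∀ j, Θi j)} {θ y : ∀ j, Θi j} (hθ : θ ∈ E) :
    y ∈ canonN ρ f (n+1) E θ ↔
      ∃ τ ∈ canonN ρ f n E θ, y ∈ E ∧ ∀ i, simRel ρ f (canonN ρ f n) E i τ y := by
  rw [canonN_succ_apply ρ f n E θ hθ]
  simp only [Set.mem_iUnion, Set.mem_setOf_eq, exists_prop]

lemma mem_canonN_self : ∀ (n : ℕ) (E : Set (∀ j, Θi j)) (θ : ∀ j, Θi j), θ ∈ E →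
    θ ∈ canonN ρ f n E θ
  | 0, E, θ, hθ => by simp [canonN, hθ]
  | n+1, E, θ, hθ => by
      rw [mem_canonN_succ ρ f hθ]
      exact ⟨θ, mem_canonN_self n E θ hθ, hθ, fun i => Or.inl rfl⟩

lemma isSemiOp_canonN (n : ℕ) : IsSemiOp (canonN ρ f n) := by
  intro E θ hE
  by_cases hθ : θ ∈ E
  · exact ⟨θ, mem_canonN_self ρ f n E θ hθ⟩
  · rw [canonN_of_not_mem ρ f n hθ]; exact hE

lemma R_mono (hρ : Dissectible ρ) {γ₁ γ₂ : Set (∀ j, Θi j) → (∀ j, Θi j) → Set (∀ j, Θi j)}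
    (h1 : IsSemiOp γ₁) (h2 : IsSemiOp γ₂)
    {E : Set (∀ j, Θi j)} {θ θ' : ∀ j, Θi j} (hE : E.Nonempty) (hθ : θ ∈ E) (hθ' : θ' ∈ E)
    (i : I) (Fhat : Set (∀ j, Θi j)) (hsub : γ₁ E θ ⊆ γ₂ E θ)
    (h : ¬ ρ.R f γ₁ E θ θ' i Fhat) : ¬ ρ.R f γ₂ E θ θ' i Fhat := by
  rw [hρ f γ₂ E θ θ' i Fhat h2 hE hθ hθ']
  rw [hρ f γ₁ E θ θ' i Fhat h1 hE hθ hθ'] at h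
  obtain ⟨τ, hτ, γ', hγ'⟩ := h
  exact ⟨τ, hsub hτ, γ', hγ'⟩

lemma gtRel_mono (hρ : Dissectible ρ)
    {γ₁ γ₂ : Set (∀ j, Θi j) → (∀ j, Θi j) → Set (∀ j, Θi j)}
    (h1 : IsSemiOp γ₁) (h2 : IsSemiOp γ₂)
    {E : Set (∀ j, Θi j)} (hE : E.Nonempty) (i : I) {a b : ∀ j, Θi j}
    (hsub : γ₁ E a ⊆ γ₂ E a) (h : gtRel ρ f γ₁ E i a b) : gtRel ρ f γ₂ E i a b :=
  ⟨h.1, h.2.1, R_mono ρ f hρ h1 h2 hE h.1 h.2.1 i E hsub h.2.2⟩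

lemma canonN_mono_succ (hρ : Dissectible ρ) :
    ∀ (n : ℕ) (E : Set (∀ j, Θi j)), E.Nonempty → ∀ θ : ∀ j, Θi j,
      canonN ρ f n E θ ⊆ canonN ρ f (n+1) E θ
  | 0, E, hE, θ => by
      by_cases hθ : θ ∈ E
      · intro y hy
        simp only [canonN, if_pos hθ, Set.mem_singleton_iff] at hy
        subst hy
        exact mem_canonN_self ρ f 1 E y hθ
      · rw [canonN_of_not_mem ρ f 0 hθ, canonN_of_not_mem ρ f 1 hθ]
  | n+1, E, hE, θ => by
      by_cases hθ : θ ∈ E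
      · intro y hy
        rw [mem_canonN_succ ρ f hθ] at hy
        rw [mem_canonN_succ ρ f hθ]
        obtain ⟨τ, hτ, hyE, hsim⟩ := hy
        have hτE : τ ∈ E := canonN_subset ρ f n E θ hθ hτ
        refine ⟨τ, canonN_mono_succ hρ n E hE θ hτ, hyE, fun i => ?_⟩
        rcases hsim i with h | h | h
        · exact Or.inl h
        · exact Or.inr <| Or.inl <| gtRel_mono ρ f hρ (isSemiOp_canonN ρ f n)
            (isSemiOp_canonN ρ f (n+1)) hE i (canonN_mono_succ hρ n E hE τ) h
        · exact Or.inr <| Or.inr <| gtRel_mono ρ f hρ (isSemiOp_canonN ρ f n)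
            (isSemiOp_canonN ρ f (n+1)) hE i (canonN_mono_succ hρ n E hE y) h
      · rw [canonN_of_not_mem ρ f (n+1) hθ, canonN_of_not_mem ρ f (n+2) hθ]

lemma canonN_mono (hρ : Dissectible ρ) {m n : ℕ} (hmn : m ≤ n)
    {E : Set (∀ j, Θi j)} (hE : E.Nonempty) (θ : ∀ j, Θi j) :
    canonN ρ f m E θ ⊆ canonN ρ f n E θ := by
  induction n, hmn using Nat.le_induction with
  | base => exact subset_rfl
  | succ n hmn ih => exact ih.trans (canonN_mono_succ ρ f hρ n E hE θ)

lemma simRel_mono (hρ : Dissectible ρ) {m n : ℕ} (hmn : m ≤ n)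
    {E : Set (∀ j, Θi j)} (hE : E.Nonempty) (i : I) {a b : ∀ j, Θi j}
    (h : simRel ρ f (canonN ρ f m) E i a b) : simRel ρ f (canonN ρ f n) E i a b := by
  rcases h with h | h | h
  · exact Or.inl h
  · exact Or.inr <| Or.inl <| gtRel_mono ρ f hρ (isSemiOp_canonN ρ f m)
      (isSemiOp_canonN ρ f n) hE i (canonN_mono ρ f hρ hmn hE a) h
  · exact Or.inr <| Or.inr <| gtRel_mono ρ f hρ (isSemiOp_canonN ρ f m)
      (isSemiOp_canonN ρ f n) hE i (canonN_mono ρ f hρ hmn hE b) h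

lemma mem_canon_iff {E : Set (∀ j, Θi j)} {x y : ∀ j, Θi j} (hx : x ∈ E) :
    y ∈ canon ρ f E x ↔ ∃ n, y ∈ canonN ρ f n E x := by
  simp [canon, if_pos hx]

lemma canon_subset {E : Set (∀ j, Θi j)} {x : ∀ j, Θi j} (hx : x ∈ E) :
    canon ρ f E x ⊆ E := by
  intro y hy
  rw [mem_canon_iff ρ f hx] at hy
  obtain ⟨n, hn⟩ := hy
  exact canonN_subset ρ f n E x hx hn

lemma canonN_sub_canon (hρ : Dissectible ρ) {E : Set (∀ j, Θi j)} (hE : E.Nonempty)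
    {x y : ∀ j, Θi j} (hx : x ∈ E) (hy : y ∈ canon ρ f E x) :
    ∀ m, canonN ρ f m E y ⊆ canon ρ f E x := by
  have hyE : y ∈ E := canon_subset ρ f hx hy
  intro m
  induction m with
  | zero =>
      intro z hz
      simp only [canonN, if_pos hyE, Set.mem_singleton_iff] at hz
      subst hz; exact hy
  | succ m ih =>
      intro z hz
      rw [mem_canonN_succ ρ f hyE] at hz
      obtain ⟨σ, hσ, hzE, hsim⟩ := hz
      have hσc : σ ∈ canon ρ f E x := ih hσ
      rw [mem_canon_iff ρ f hx] at hσc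
      obtain ⟨k, hk⟩ := hσc
      have hσN : σ ∈ canonN ρ f (max k m) E x :=
        canonN_mono ρ f hρ (le_max_left k m) hE x hk
      rw [mem_canon_iff ρ f hx]
      refine ⟨max k m + 1, ?_⟩
      rw [mem_canonN_succ ρ f hx]
      exact ⟨σ, hσN, hzE, fun i => simRel_mono ρ f hρ (le_max_right k m) hE i (hsim i)⟩

lemma mem_canon_symm (hρ : Dissectible ρ) {E : Set (∀ j, Θi j)} (hE : E.Nonempty) :
    ∀ (n : ℕ) (x y : ∀ j, Θi j), x ∈ E → y ∈ canonN ρ f n E x → x ∈ canon ρ f E y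
  | 0, x, y, hx, hy => by
      simp only [canonN, if_pos hx, Set.mem_singleton_iff] at hy
      obtain rfl := hy
      exact (mem_canon_iff ρ f hx).2 ⟨0, mem_canonN_self ρ f 0 _ _ hx⟩
  | n+1, x, y, hx, hy => by
      rw [mem_canonN_succ ρ f hx] at hy
      obtain ⟨τ, hτ, hyE, hsim⟩ := hy
      have hτE : τ ∈ E := canonN_subset ρ f n E x hx hτ
      have hτy : τ ∈ canonN ρ f (n+1) E y := by
        rw [mem_canonN_succ ρ f hyE]
        refine ⟨y, mem_canonN_self ρ f n E y hyE, hτE, fun i => ?_⟩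
        rcases hsim i with h | h | h
        · exact Or.inl h.symm
        · exact Or.inr (Or.inr h)
        · exact Or.inr (Or.inl h)
      have hτc : τ ∈ canon ρ f E y := (mem_canon_iff ρ f hyE).2 ⟨n+1, hτy⟩
      have hxτ : x ∈ canon ρ f E τ := mem_canon_symm hρ hE n x τ hx hτ
      rw [mem_canon_iff ρ f hτE] at hxτ
      obtain ⟨m, hm⟩ := hxτ
      exact canonN_sub_canon ρ f hρ hE hyE hτc m hm

end Aux

/-- for a dissectible solution notion `ρ` and an SCF `f`, the canonical
semi-operator `γ^{(ρ,f)}` is an operator. -/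
theorem canon_isOperator
    [Fintype I] [Nonempty I] [∀ i, Fintype (Θi i)] [∀ i, Nonempty (Θi i)]
    (ρ : SolutionNotion I Θi X) (hρ : Dissectible ρ) (f : (∀ j, Θi j) → X)
    (E : Set (∀ j, Θi j)) (hE : E.Nonempty)
    (θ θ' : ∀ j, Θi j) (hθ : θ ∈ E) (hθ' : θ' ∈ E) :
    θ ∈ canon ρ f E θ ∧ canon ρ f E θ ⊆ E ∧
      (θ' ∈ canon ρ f E θ → canon ρ f E θ' = canon ρ f E θ) := by
  refine ⟨(mem_canon_iff ρ f hθ).2 ⟨0, mem_canonN_self ρ f 0 E θ hθ⟩,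
    canon_subset ρ f hθ, fun hmem => ?_⟩
  have h1 : canon ρ f E θ' ⊆ canon ρ f E θ := by
    intro z hz
    rw [mem_canon_iff ρ f hθ'] at hz
    obtain ⟨m, hm⟩ := hz
    exact canonN_sub_canon ρ f hρ hE hθ hmem m hm
  have hsym : θ ∈ canon ρ f E θ' := by
    rw [mem_canon_iff ρ f hθ] at hmem
    obtain ⟨n, hn⟩ := hmem
    exact mem_canon_symm ρ f hρ hE n θ θ' hθ hn
  have h2 : canon ρ f E θ ⊆ canon ρ f E θ' := by
    intro z hz
    rw [mem_canon_iff ρ f hθ] at hz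
    obtain ⟨m, hm⟩ := hz
    exact canonN_sub_canon ρ f hρ hE hθ' hsym m hm
  exact Set.Subset.antisymm h1 h2

end SeqMech
end

section
/- Let ρ be a normal solution notion and f : Θ → X a social choice function. Then the canonical semi-operator γ^{(ρ,f)} is achievable if and only if it is f-achievable. -/
open scoped Classical

namespace SeqMech

variable {I : Type*} {Θi : I → Type*} {X : Type*}

/-- Normality of a solution notion: truthful reporting is a best reply on any set
on which `f` is constant. -/
def Normal (ρ : SolutionNotion I Θi X) : Prop :=
  ∀ f γ E θ θ' (i : I),
    IsSemiOp γ → E.Nonempty → θ ∈ E → θ' ∈ E →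
    (∀ a ∈ E, ∀ b ∈ E, f a = f b) → ρ.R f γ E θ θ' i E

/-- The iterates `γ_{(n)}[Θ,θ]` of a semi-operator. -/
def iter (γ : Set (∀ j, Θi j) → (∀ j, Θi j) → Set (∀ j, Θi j)) :
    ℕ → (∀ j, Θi j) → Set (∀ j, Θi j)
  | 0, _ => Set.univ
  | n + 1, θ => γ (iter γ n θ) θ

/-- Achievability of a semi-operator. -/
def Achievable (γ : Set (∀ j, Θi j) → (∀ j, Θi j) → Set (∀ j, Θi j)) : Prop :=
  ∃ N : ℕ, ∀ θ, iter γ N θ = {θ}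

/-- `f`-achievability of a semi-operator. -/
def FAchievable (γ : Set (∀ j, Θi j) → (∀ j, Θi j) → Set (∀ j, Θi j))
    (f : (∀ j, Θi j) → X) : Prop :=
  ∃ N : ℕ, ∀ θ, ∀ τ ∈ iter γ N θ, f τ = f θ

lemma mem_canonN (ρ : SolutionNotion I Θi X) (f : (∀ j, Θi j) → X)
    (n : ℕ) (E : Set (∀ j, Θi j)) (θ : ∀ j, Θi j) (hθ : θ ∈ E) :
    θ ∈ canonN ρ f n E θ := by
  induction n with
  | zero => simp [canonN, hθ]
  | succ n ih =>
    simp only [canonN, if_pos hθ, Set.mem_iUnion]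
    exact ⟨θ, ih, hθ, fun i => Or.inl rfl⟩

lemma canonN_isSemiOp (ρ : SolutionNotion I Θi X) (f : (∀ j, Θi j) → X)
    (n : ℕ) : IsSemiOp (canonN ρ f n) := by
  intro E θ hE
  by_cases hθ : θ ∈ E
  · exact ⟨θ, mem_canonN ρ f n E θ hθ⟩
  · cases n with
    | zero => simpa [canonN, hθ] using hE
    | succ n => simpa [canonN, hθ] using hE

lemma canonN_const (ρ : SolutionNotion I Θi X) (hρ : Normal ρ)
    (f : (∀ j, Θi j) → X) (n : ℕ) (E : Set (∀ j, Θi j)) (θ : ∀ j, Θi j)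
    (hθ : θ ∈ E) (hf : ∀ a ∈ E, ∀ b ∈ E, f a = f b) :
    canonN ρ f n E θ = {θ} := by
  induction n with
  | zero => simp [canonN, hθ]
  | succ n ih =>
    simp only [canonN, if_pos hθ, ih]
    ext θ'
    simp only [Set.mem_iUnion, Set.mem_singleton_iff, Set.mem_setOf_eq]
    constructor
    · rintro ⟨τ, hτ, hθ'E, hsim⟩
      subst hτ
      funext i
      rcases hsim i with h | h | h
      · exact h.symm
      · exact absurd (hρ f _ E τ θ' i (canonN_isSemiOp ρ f n) ⟨τ, hθ⟩ hθ hθ'E hf) h.2.2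
      · exact absurd (hρ f _ E θ' τ i (canonN_isSemiOp ρ f n) ⟨τ, hθ⟩ hθ'E hθ hf) h.2.2
    · rintro rfl
      exact ⟨θ', rfl, hθ, fun i => Or.inl rfl⟩

lemma canon_const (ρ : SolutionNotion I Θi X) (hρ : Normal ρ)
    (f : (∀ j, Θi j) → X) (E : Set (∀ j, Θi j)) (θ : ∀ j, Θi j)
    (hθ : θ ∈ E) (hf : ∀ a ∈ E, ∀ b ∈ E, f a = f b) :
    canon ρ f E θ = {θ} := by
  simp only [canon, if_pos hθ]
  have : ∀ n, canonN ρ f n E θ = {θ} := fun n => canonN_const ρ hρ f n E θ hθ hf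
  simp [this]

lemma mem_iter_canon (ρ : SolutionNotion I Θi X) (f : (∀ j, Θi j) → X)
    (n : ℕ) (θ : ∀ j, Θi j) : θ ∈ iter (canon ρ f) n θ := by
  induction n with
  | zero => simp [iter]
  | succ n ih =>
    show θ ∈ canon ρ f (iter (canon ρ f) n θ) θ
    simp only [canon, if_pos ih, Set.mem_iUnion]
    exact ⟨0, mem_canonN ρ f 0 _ θ ih⟩

/-- for a normal solution notion `ρ` and an SCF `f`, the canonical
semi-operator `γ^{(ρ,f)}` is achievable iff it is `f`-achievable. -/
theorem canon_achievable_iff_fAchievable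
    [Fintype I] [Nonempty I] [∀ i, Fintype (Θi i)] [∀ i, Nonempty (Θi i)]
    (ρ : SolutionNotion I Θi X) (hρ : Normal ρ) (f : (∀ j, Θi j) → X) :
    Achievable (canon ρ f) ↔ FAchievable (canon ρ f) f := by
  constructor
  · rintro ⟨N, hN⟩
    exact ⟨N, fun θ τ hτ => by rw [hN θ] at hτ; rw [hτ]⟩
  · rintro ⟨N, hN⟩
    refine ⟨N + 1, fun θ => ?_⟩
    show canon ρ f (iter (canon ρ f) N θ) θ = {θ}
    exact canon_const ρ hρ f _ θ (mem_iter_canon ρ f N θ)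
      (fun a ha b hb => (hN θ a ha).trans (hN θ b hb).symm)

end SeqMech
end

section
/- Let ρ be a dissectible solution notion. Then for every social choice function f : Θ → X, all semi-operators γ and γ̄, all nonempty E, Ē ⊆ Θ, all θ, θ' with θ, θ' ∈ E and θ, θ' ∈ Ē, every i ∈ I and every Ê ⊆ Θ: if γ[E,θ] ⊆ γ̄[Ē,θ] and ρ[f,(γ,E),θ,θ',i,Ê] = 0, then ρ[f,(γ̄,Ē),θ,θ',i,Ê] = 0. -/
open scoped Classical

namespace SeqMech

variable {I : Type*} {Θi : I → Type*} {X : Type*}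

/-- for a dissectible solution notion, if `γ[E,θ] ⊆ γ̄[Ē,θ]` and
`ρ[f,(γ,E),θ,θ',i,Ê] = 0`, then `ρ[f,(γ̄,Ē),θ,θ',i,Ê] = 0`. -/
theorem dissectible_mono_in_operator
    [Fintype I] [Nonempty I] [∀ i, Fintype (Θi i)] [∀ i, Nonempty (Θi i)]
    (ρ : SolutionNotion I Θi X) (hρ : Dissectible ρ) (f : (∀ j, Θi j) → X)
    (γ γ' : Set (∀ j, Θi j) → (∀ j, Θi j) → Set (∀ j, Θi j))
    (hγ : IsSemiOp γ) (hγ' : IsSemiOp γ')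
    (E E' : Set (∀ j, Θi j)) (hE : E.Nonempty) (hE' : E'.Nonempty)
    (θ θ' : ∀ j, Θi j) (hθE : θ ∈ E) (hθ'E : θ' ∈ E)
    (hθE' : θ ∈ E') (hθ'E' : θ' ∈ E')
    (i : I) (Fhat : Set (∀ j, Θi j))
    (hsub : γ E θ ⊆ γ' E' θ)
    (h0 : ¬ ρ.R f γ E θ θ' i Fhat) :
    ¬ ρ.R f γ' E' θ θ' i Fhat := by
  obtain ⟨τ, hτ, gtil, hgtilso, hgtileq, htil⟩ :=
    (hρ f γ E θ θ' i Fhat hγ hE hθE hθ'E).mp h0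
  -- build a semi-operator on `E'` with value `{θ, τ}` at `(E', θ)`
  set γ₂ : Set (∀ j, Θi j) → (∀ j, Θi j) → Set (∀ j, Θi j) :=
    fun F σ => if F = E' ∧ σ = θ then {θ, τ} else F with hγ₂def
  have hγ₂so : IsSemiOp γ₂ := by
    intro F σ hF
    by_cases h : F = E' ∧ σ = θ
    · simp [hγ₂def, h]
    · simpa [hγ₂def, h] using hF
  have hγ₂eq : γ₂ E' θ = {θ, τ} := by simp [hγ₂def]
  have h₂ : ¬ ρ.R f γ₂ E' θ θ' i Fhat := by
    have := ρ.meas f gtil γ₂ E E' θ θ θ' θ' i Fhat Fhat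
      (by rw [hgtileq, hγ₂eq]) rfl rfl rfl
    exact fun h => htil (this.mpr h)
  exact (hρ f γ' E' θ θ' i Fhat hγ' hE' hθE' hθ'E').mpr
    ⟨τ, hsub hτ, γ₂, hγ₂so, hγ₂eq, h₂⟩

end SeqMech
end

section
/- Let G be a mechanism with perfect recall and S a strategy profile in G. Then for every agent i ∈ I and all nonterminal histories h, h' ∈ ℋ∖𝒯 with φ(h) = φ(h') = i and ζ_i(h) = ζ_i(h'): if ℰ^{[G,S]-h} ≠ ∅ and ℰ^{[G,S]-h'} ≠ ∅, then ℰ_i^{[G,S]-h} = ℰ_i^{[G,S]-h'}. -/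
namespace SeqMech

variable {I : Type*} {Θi : I → Type*} {A : Type*}

/-- A mechanism (a sequential-move game form): histories are lists of actions of
length at most `K`; `ℋ` contains the empty history and is prefix-closed; `player`
assigns the mover at each (nonterminal) history, and `info i` is agent `i`'s
information map `ζ_i`. -/
structure Mechanism (I : Type*) (A : Type*) where
  H : Set (List A)
  K : ℕ
  empty_mem : ([] : List A) ∈ H
  length_le : ∀ h ∈ H, h.length ≤ K
  prefix_closed : ∀ h ∈ H, ∀ h' : List A, h' <+: h → h' ∈ H
  player : List A → I
  info : I → List A → List A
  actions_nonempty :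
    ∀ h ∈ H, (∃ t ∈ H, h <+: t ∧ t ≠ h) → ∃ a : A, h ++ [a] ∈ H
  sim_actions :
    ∀ h ∈ H, ∀ h' ∈ H,
      (∃ t ∈ H, h <+: t ∧ t ≠ h) → (∃ t ∈ H, h' <+: t ∧ t ≠ h') →
      player h = player h' → info (player h) h = info (player h) h' →
      {a : A | h ++ [a] ∈ H} = {a : A | h' ++ [a] ∈ H}

/-- A terminal history: a history that is not a proper prefix of any history. -/
def Mechanism.Terminal (G : Mechanism I A) (h : List A) : Prop :=
  h ∈ G.H ∧ ∀ h' ∈ G.H, h <+: h' → h' = h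

/-- A behavior strategy of agent `i`: at each of `i`'s nonterminal histories it
chooses an available action, measurably with respect to `i`'s information sets. -/
structure BStrat (G : Mechanism I A) (i : I) where
  act : List A → A
  valid : ∀ h ∈ G.H, ¬ G.Terminal h → G.player h = i → h ++ [act h] ∈ G.H
  meas : ∀ h ∈ G.H, ∀ h' ∈ G.H, ¬ G.Terminal h → ¬ G.Terminal h' →
      G.player h = i → G.player h' = i → G.info i h = G.info i h' →
      act h = act h'

/-- `IsPlay G B t`: the terminal history `t` is the outcome `T^G(B)` of the behavior
strategy profile `B`. -/
def IsPlay (G : Mechanism I A) (B : ∀ i, BStrat G i) (t : List A) : Prop :=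
  G.Terminal t ∧
    ∀ h : List A, h <+: t → h ≠ t → h ++ [(B (G.player h)).act h] <+: t

/-- `ℰ^{[G,S]-h}`: the set of states `θ` at which `S(θ)` reaches (a history extending)
`h`, i.e. `h` is a prefix of `T^G(S(θ))`. -/
def reach (G : Mechanism I A) (S : ∀ i, Θi i → BStrat G i) (h : List A) :
    Set (∀ j, Θi j) :=
  {θ | ∃ t, IsPlay G (fun i => S i (θ i)) t ∧ h <+: t}

/-- Perfect recall. -/
def PerfectRecall (G : Mechanism I A) : Prop :=
  ∀ h ∈ G.H, ∀ h' ∈ G.H, ∀ h'' ∈ G.H, ∀ a : A,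
    G.player h = G.player h' → G.player h' = G.player h'' →
    ¬ G.Terminal h' → ¬ G.Terminal h'' →
    G.info (G.player h') h' = G.info (G.player h') h'' →
    (h ++ [a]) <+: h' →
    ∃ ht ∈ G.H, ¬ G.Terminal ht ∧ G.player ht = G.player h ∧
      G.info (G.player h) ht = G.info (G.player h) h ∧ (ht ++ [a]) <+: h''

theorem next_action_of_proper_prefix {g h : List A} (hp : g <+: h) (hne : g ≠ h) :
    ∃ a, g ++ [a] <+: h := by
  obtain ⟨s, rfl⟩ := hp
  cases s with
  | nil => simp at hne
  | cons b s' => exact ⟨b, s', by simp⟩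

theorem play_act_eq (G : Mechanism I A) (B : ∀ i, BStrat G i) {t : List A}
    (hplay : IsPlay G B t) {g : List A} {a : A} (hga : g ++ [a] <+: t) :
    (B (G.player g)).act g = a := by
  have hgt : g <+: t := (List.prefix_append _ _).trans hga
  have hgne : g ≠ t := by
    rintro rfl
    have := hga.length_le
    simp at this
  have h2 := hplay.2 g hgt hgne
  rcases List.prefix_or_prefix_of_prefix h2 hga with hc | hc
  · have heq := hc.eq_of_length (by simp)
    have := List.append_cancel_left heq
    simpa using this
  · have heq := hc.eq_of_length (by simp)
    have := List.append_cancel_left heq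
    simpa using this.symm

theorem not_terminal_of_proper_prefix (G : Mechanism I A) {g h : List A}
    (hh : h ∈ G.H) (hp : g <+: h) (hne : g ≠ h) : ¬ G.Terminal g := by
  intro ht
  exact hne (ht.2 h hh hp).symm

theorem exists_play_from (G : Mechanism I A) (B : ∀ i, BStrat G i) :
    ∀ n (h : List A), h ∈ G.H → G.K ≤ h.length + n →
    ∃ t, G.Terminal t ∧ h <+: t ∧
      ∀ g, h <+: g → g <+: t → g ≠ t →
        g ++ [(B (G.player g)).act g] <+: t := by
  intro n
  induction n with
  | zero =>
    intro h hh hlen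
    have hterm : G.Terminal h := by
      refine ⟨hh, fun h' hh' hp => ?_⟩
      have h1 : h.length ≤ h'.length := hp.length_le
      have h2 : h'.length ≤ G.K := G.length_le h' hh'
      exact (hp.eq_of_length (by omega)).symm
    refine ⟨h, hterm, List.prefix_refl h, ?_⟩
    intro g hg1 hg2 hg3
    exact absurd (hg2.eq_of_length (le_antisymm hg2.length_le hg1.length_le)) hg3
  | succ n ih =>
    intro h hh hlen
    by_cases hterm : G.Terminal h
    · refine ⟨h, hterm, List.prefix_refl h, ?_⟩
      intro g hg1 hg2 hg3
      exact absurd (hg2.eq_of_length (le_antisymm hg2.length_le hg1.length_le)) hg3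
    · set h1 := h ++ [(B (G.player h)).act h] with hh1def
      have hh1 : h1 ∈ G.H := (B (G.player h)).valid h hh hterm rfl
      have hlen1 : G.K ≤ h1.length + n := by simp [hh1def]; omega
      obtain ⟨t, htterm, htpre, htcond⟩ := ih h1 hh1 hlen1
      refine ⟨t, htterm, (List.prefix_append _ _).trans htpre, ?_⟩
      intro g hg1 hg2 hg3
      rcases List.prefix_or_prefix_of_prefix hg2 htpre with hc | hc
      · -- g <+: h1
        have hlg : g.length ≤ h.length + 1 := by
          have := hc.length_le; simpa [hh1def] using this
        rcases eq_or_lt_of_le hlg with heq | hlt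
        · have : g = h1 := hc.eq_of_length (by simp [hh1def, heq])
          subst this
          exact htcond h1 (List.prefix_refl h1) hg2 hg3
        · have hgl : g.length ≤ h.length := by omega
          have : h = g := hg1.eq_of_length (le_antisymm hg1.length_le hgl)
          subst this
          exact htpre
      · exact htcond g hc hg2 hg3

theorem exists_play (G : Mechanism I A) (B : ∀ i, BStrat G i) {h : List A}
    (hh : h ∈ G.H)
    (hcons : ∀ g a, g ++ [a] <+: h → (B (G.player g)).act g = a) :
    ∃ t, IsPlay G B t ∧ h <+: t := by
  obtain ⟨t, hterm, hpre, hcond⟩ :=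
    exists_play_from G B G.K h hh (by omega)
  refine ⟨t, ⟨hterm, ?_⟩, hpre⟩
  intro g hg hgne
  rcases List.prefix_or_prefix_of_prefix hg hpre with hc | hc
  · by_cases hge : g = h
    · subst hge
      exact hcond g (List.prefix_refl g) hg hgne
    · obtain ⟨a, ha⟩ := next_action_of_proper_prefix hc hge
      rw [hcons g a ha]
      exact ha.trans hpre
  · exact hcond g hc hg hgne

theorem reach_proj_subset
    (G : Mechanism I A) (hPR : PerfectRecall G)
    (S : ∀ i, Θi i → BStrat G i) (i : I)
    (h h' : List A) (hh : h ∈ G.H) (hh' : h' ∈ G.H)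
    (hnt : ¬ G.Terminal h) (hnt' : ¬ G.Terminal h')
    (hp : G.player h = i) (hp' : G.player h' = i)
    (hinfo : G.info i h = G.info i h')
    (hne' : (reach G S h').Nonempty) :
    (fun θ => θ i) '' reach G S h ⊆ (fun θ => θ i) '' reach G S h' := by
  classical
  rintro x ⟨θ, ⟨t, hplay, hpre⟩, rfl⟩
  obtain ⟨θ', t', hplay', hpre'⟩ := hne'
  set θ'' : ∀ j, Θi j := Function.update θ' i (θ i) with hθ''
  have hcons : ∀ g a, g ++ [a] <+: h' →
      ((fun j => S j (θ'' j)) (G.player g)).act g = a := by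
    intro g a hga
    have hgpre : g <+: h' := (List.prefix_append _ _).trans hga
    have hg : g ∈ G.H := G.prefix_closed h' hh' g hgpre
    have hgne : g ≠ h' := by
      rintro rfl
      have := hga.length_le
      simp at this
    have hgnt : ¬ G.Terminal g := not_terminal_of_proper_prefix G hh' hgpre hgne
    by_cases hpg : G.player g = i
    · obtain ⟨ht, htH, htnt, htp, htinfo, htpre⟩ :=
        hPR g hg h' hh' h hh a (by rw [hpg, hp']) (by rw [hp', hp]) hnt' hnt
          (by rw [hp']; exact hinfo.symm) hga
      have ha : (S i (θ i)).act ht = a := by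
        have := play_act_eq G (fun j => S j (θ j)) hplay (htpre.trans hpre)
        rwa [htp, hpg] at this
      have hmeas := (S i (θ i)).meas g hg ht htH hgnt htnt hpg
        (by rw [htp, hpg]) (by rw [← hpg]; exact htinfo.symm)
      show (S (G.player g) (θ'' (G.player g))).act g = a
      rw [hpg]
      have hup : θ'' i = θ i := by rw [hθ'']; simp
      rw [hup, hmeas]
      exact ha
    · have hupd : θ'' (G.player g) = θ' (G.player g) := by
        rw [hθ'', Function.update_of_ne hpg]
      simp only [hupd]
      exact play_act_eq G (fun j => S j (θ' j)) hplay' (hga.trans hpre')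
  obtain ⟨t'', hplay'', hpre''⟩ := exists_play G (fun j => S j (θ'' j)) hh' hcons
  exact ⟨θ'', ⟨t'', hplay'', hpre''⟩, by simp [hθ'']⟩

/-- in a mechanism with perfect recall, if two nonterminal histories
`h, h'` of agent `i` lie in the same information set and both are reached at some
state under `S`, then agent `i` reveals the same set of types at `h` and at `h'`:
`ℰ_i^{[G,S]-h} = ℰ_i^{[G,S]-h'}`. -/
theorem perfectRecall_reach_proj_eq
    [Fintype I] [Nonempty I] [∀ i, Nonempty (Θi i)]
    (G : Mechanism I A) (hPR : PerfectRecall G)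
    (S : ∀ i, Θi i → BStrat G i) (i : I)
    (h h' : List A) (hh : h ∈ G.H) (hh' : h' ∈ G.H)
    (hnt : ¬ G.Terminal h) (hnt' : ¬ G.Terminal h')
    (hp : G.player h = i) (hp' : G.player h' = i)
    (hinfo : G.info i h = G.info i h')
    (hne : (reach G S h).Nonempty) (hne' : (reach G S h').Nonempty) :
    (fun θ => θ i) '' reach G S h = (fun θ => θ i) '' reach G S h' := by
  apply Set.Subset.antisymm
  · exact reach_proj_subset G hPR S i h h' hh hh' hnt hnt' hp hp' hinfo hne'
  · exact reach_proj_subset G hPR S i h' h hh' hh hnt' hnt hp' hp hinfo.symm hne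

end SeqMech
end
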